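/- Let d, n ∈ ℕ+, let s = ⌈log₂(n + 1)⌉, and define f(1) = 1 and f(i) = i − 1 for 2 ≤ i ≤ n. Then there exist a precision s' and parameters W_Q, W_K, W_V, W_O of a single s'-precision causal self-attention head on embedding dimension d + 2s such that for all x₁, …, x_n ∈ 𝔽_{s'}^d, applying the head to the augmented sequence x'_i = (x_i, sbin_s(i), sbin_s(f(i))) produces at every position i ∈ {1, …, n} the output (x_{f(i)}, 0^{2s}); in particular, the first d coordinates of the attention outputs realize the shift map SHIFT(x₁, x₂, …, x_n) = (x₁, x₁, x₂, …, x_{n−1}). -/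

import Mathlib

noncomputable section

namespace LoopedTF

/-- The ReLU activation. -/
def relu (x : ℝ) : ℝ := max x 0

/-- `Fp s` : fixed-point numbers of precision `s`,
`{c·k·2^{-s} : c ∈ {-1,1}, k ∈ ℕ, 0 ≤ k ≤ 2^{2s}-1}`. -/
def Fp (s : ℕ) : Set ℝ :=
  {x | ∃ (c : ℝ) (k : ℕ), (c = 1 ∨ c = -1) ∧ k ≤ 2 ^ (2 * s) - 1 ∧
    x = c * (k : ℝ) * (2 : ℝ) ^ (-(s : ℤ))}

/-- Correct rounding of a nonnegative real to `Fp s` (nearest element, ties broken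
downwards, i.e. towards smaller absolute value, clamped at the largest element). -/
def rdPos (s : ℕ) (x : ℝ) : ℝ :=
  min ((2 : ℝ) ^ (2 * s) - 1) ((⌈x * (2 : ℝ) ^ s - 1 / 2⌉ : ℤ) : ℝ) * (2 : ℝ) ^ (-(s : ℤ))

/-- `rd s` : correct rounding to the nearest element of `Fp s`,
ties broken toward smaller absolute value. -/
def rd (s : ℕ) (x : ℝ) : ℝ := if 0 ≤ x then rdPos s x else -rdPos s (-x)

/-- Addition with rounding after the operation. -/
def rAdd (s : ℕ) (x y : ℝ) : ℝ := rd s (x + y)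

/-- Multiplication with rounding after the operation. -/
def rMul (s : ℕ) (x y : ℝ) : ℝ := rd s (x * y)

/-- Exponential with rounding after the operation. -/
def rExp (s : ℕ) (x : ℝ) : ℝ := rd s (Real.exp x)

/-- Division with rounding after the operation. -/
def rDiv (s : ℕ) (x y : ℝ) : ℝ := rd s (x / y)

/-- A finite sum computed with rounding after every binary addition. -/
def rSum (s : ℕ) {n : ℕ} (f : Fin n → ℝ) : ℝ := (List.ofFn f).foldl (rAdd s) 0

/-- Inner product computed in precision `s`. -/
def rDot (s : ℕ) {n : ℕ} (u v : Fin n → ℝ) : ℝ := rSum s fun i => rMul s (u i) (v i)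

/-- Matrix-vector product computed in precision `s`. -/
def rMulVec (s : ℕ) {m n : ℕ} (W : Matrix (Fin m) (Fin n) ℝ) (x : Fin n → ℝ) :
    Fin m → ℝ := fun i => rDot s (W i) x

/-- Softmax computed in precision `s`. -/
def rSoftmax (s : ℕ) {n : ℕ} (z : Fin n → ℝ) : Fin n → ℝ :=
  fun i => rDiv s (rExp s (z i)) (rSum s fun j => rExp s (z j))

/-- Parameters `W_Q, W_K, W_V, W_O ∈ ℝ^{d_ATTN × d}` of one attention head. -/
structure AttnParams (d dA : ℕ) where
  WQ : Matrix (Fin dA) (Fin d) ℝ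
  WK : Matrix (Fin dA) (Fin d) ℝ
  WV : Matrix (Fin dA) (Fin d) ℝ
  WO : Matrix (Fin dA) (Fin d) ℝ

/-- All parameters of the attention head lie in `Fp s`. -/
def AttnParams.inFp {d dA : ℕ} (s : ℕ) (p : AttnParams d dA) : Prop :=
  (∀ i j, p.WQ i j ∈ Fp s) ∧ (∀ i j, p.WK i j ∈ Fp s) ∧
  (∀ i j, p.WV i j ∈ Fp s) ∧ (∀ i j, p.WO i j ∈ Fp s)

/-- A causal self-attention head: position `i` outputs
`W_O^T Σ_{j ≤ i} (softmax(⟨W_Q x_i, W_K x_1⟩,…,⟨W_Q x_i, W_K x_i⟩))_j W_V x_j`,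
with every arithmetic operation rounded to precision `s`. -/
def attnHead (s : ℕ) {d dA : ℕ} (p : AttnParams d dA) {n : ℕ}
    (x : Fin n → Fin d → ℝ) : Fin n → Fin d → ℝ := fun i =>
  let prev : Fin (i.1 + 1) → Fin d → ℝ :=
    fun j => x ⟨j.1, lt_of_le_of_lt (Nat.lt_succ_iff.mp j.2) i.2⟩
  let q : Fin dA → ℝ := rMulVec s p.WQ (x i)
  let w : Fin (i.1 + 1) → ℝ := rSoftmax s fun j => rDot s q (rMulVec s p.WK (prev j))
  fun k => rDot s (fun l => p.WO l k)
    (fun l => rSum s fun j => rMul s (w j) (rMulVec s p.WV (prev j) l))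

/-- Multi-head attention: the sum of the outputs of the `H` heads. -/
def mha (s : ℕ) {H d dA n : ℕ} (p : Fin H → AttnParams d dA)
    (x : Fin n → Fin d → ℝ) : Fin n → Fin d → ℝ :=
  fun i k => rSum s fun h => attnHead s (p h) x i k

/-- Parameters of a position-wise feed-forward layer `x ↦ W₂ relu(W₁x+b₁)+b₂`. -/
structure FFParams (d dFF : ℕ) where
  W1 : Matrix (Fin dFF) (Fin d) ℝ
  b1 : Fin dFF → ℝ
  W2 : Matrix (Fin d) (Fin dFF) ℝ
  b2 : Fin d → ℝ

/-- All parameters of the feed-forward layer lie in `Fp s`. -/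
def FFParams.inFp {d dFF : ℕ} (s : ℕ) (p : FFParams d dFF) : Prop :=
  (∀ i j, p.W1 i j ∈ Fp s) ∧ (∀ i, p.b1 i ∈ Fp s) ∧
  (∀ i j, p.W2 i j ∈ Fp s) ∧ (∀ i, p.b2 i ∈ Fp s)

/-- The feed-forward layer `x ↦ W₂ relu(W₁x+b₁)+b₂` in precision `s`. -/
def ffApply (s : ℕ) {d dFF : ℕ} (p : FFParams d dFF) (x : Fin d → ℝ) : Fin d → ℝ :=
  fun k => rAdd s
    (rDot s (p.W2 k) (fun j => relu (rAdd s (rDot s (p.W1 j) x) (p.b1 j)))) (p.b2 k)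

/-- Parameters of one transformer layer: `H` attention heads and one FF layer. -/
structure LayerParams (d dFF dA H : ℕ) where
  attn : Fin H → AttnParams d dA
  ff : FFParams d dFF

/-- All parameters of the layer lie in `Fp s`. -/
def LayerParams.inFp {d dFF dA H : ℕ} (s : ℕ) (p : LayerParams d dFF dA H) : Prop :=
  (∀ h, (p.attn h).inFp s) ∧ p.ff.inFp s

/-- The half layer `id + MHA`. -/
def layerHalf (s : ℕ) {d dFF dA H n : ℕ} (p : LayerParams d dFF dA H)
    (x : Fin n → Fin d → ℝ) : Fin n → Fin d → ℝ :=
  fun i k => rAdd s (x i k) (mha s p.attn x i k)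

/-- One transformer layer `(id + FF) ∘ (id + MHA)`. -/
def layerApply (s : ℕ) {d dFF dA H n : ℕ} (p : LayerParams d dFF dA H)
    (x : Fin n → Fin d → ℝ) : Fin n → Fin d → ℝ :=
  let y := layerHalf s p x
  fun i k => rAdd s (y i k) (ffApply s p.ff (y i) k)

/-- An `L`-layer transformer block
`(id+FF^{(L-1)}) ∘ (id+MHA^{(L-1)}) ∘ ⋯ ∘ (id+FF^{(0)}) ∘ (id+MHA^{(0)})`. -/
def blockApply (s : ℕ) {L d dFF dA H n : ℕ} (p : Fin L → LayerParams d dFF dA H)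
    (x : Fin n → Fin d → ℝ) : Fin n → Fin d → ℝ :=
  (List.ofFn p).foldl (fun acc q => layerApply s q acc) x

/-- The first `t` layers of a transformer block (intermediate embeddings). -/
def blockPrefix (s : ℕ) {L d dFF dA H n : ℕ} (p : Fin L → LayerParams d dFF dA H)
    (t : ℕ) (x : Fin n → Fin d → ℝ) : Fin n → Fin d → ℝ :=
  ((List.ofFn p).take t).foldl (fun acc q => layerApply s q acc) x

/-- A (looped) transformer model: token embedding, position embedding,
an `L`-layer transformer block, and the output (unembedding) matrix. -/
structure TModel (V : Type*) (L d dFF dA H : ℕ) where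
  te : V → Fin d → ℝ
  pe : ℕ → Fin d → ℝ
  layers : Fin L → LayerParams d dFF dA H
  out : V → Fin d → ℝ

/-- The model is of precision `s`: all its parameters lie in `Fp s`. -/
def TModel.inFp {V : Type*} {L d dFF dA H : ℕ} (s : ℕ) (M : TModel V L d dFF dA H) : Prop :=
  (∀ v k, M.te v k ∈ Fp s) ∧ (∀ i k, M.pe i k ∈ Fp s) ∧
  (∀ v k, M.out v k ∈ Fp s) ∧ (∀ l, (M.layers l).inFp s)

/-- The embedding layer `(v₁,…,v_n) ↦ (θ_TE(v_i)+θ_PE(i))_i`. -/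
def TModel.embed {V : Type*} {L d dFF dA H : ℕ} (M : TModel V L d dFF dA H)
    (s : ℕ) {n : ℕ} (v : Fin n → V) : Fin n → Fin d → ℝ :=
  fun i k => rAdd s (M.te (v i) k) (M.pe i.1 k)

/-- The output distribution `p_{θ,T} = OUTPUT ∘ (TB_θ)^T ∘ EMBED` of the transformer
whose block is looped `T` times (softmax of the logits at the last position). -/
def TModel.probs {V : Type*} [Fintype V] {L d dFF dA H : ℕ} (M : TModel V L d dFF dA H)
    (s : ℕ) (T : ℕ) {n : ℕ} (v : Fin n → V) : V → ℝ :=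
  if h : 0 < n then
    let xT := (fun x => blockApply s M.layers x)^[T] (M.embed s v)
    let xl : Fin d → ℝ := xT ⟨n - 1, by omega⟩
    fun w => rDiv s (rExp s (rDot s xl (M.out w))) (rd s (∑ u : V, rExp s (rDot s xl (M.out u))))
  else fun _ => 0

/-- An argmax of `f` over a (nonempty) finite type. -/
def greedy {V : Type*} [Fintype V] [Nonempty V] (f : V → ℝ) : V :=
  Classical.choose (Finset.exists_max_image Finset.univ f
    ⟨Classical.arbitrary V, Finset.mem_univ _⟩)

/-- Greedy decoding `TF_{θ,T}(v₁,…,v_n) = argmax_{v∈V} p_{θ,T}(v | v₁,…,v_n)`. -/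
def TModel.decode {V : Type*} [Fintype V] [Nonempty V] {L d dFF dA H : ℕ}
    (M : TModel V L d dFF dA H) (s : ℕ) (T : ℕ) {n : ℕ} (v : Fin n → V) : V :=
  greedy (M.probs s T v)

end LoopedTF


namespace LoopedTF

/-- Signed binary encoding `sbin_s(i) ∈ {−1,1}^s` of `i` (`1` where bit of `i` is `1`). -/
def sbin (s i : ℕ) : Fin s → ℝ := fun k => if i.testBit (k : ℕ) then 1 else -1

/-- The index map of the shift: `f(1) = 1` and `f(i) = i − 1` for `i ≥ 2`. -/
def fShift (i : ℕ) : ℕ := if i = 1 then 1 else i - 1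

/-- The augmented sequence `x'_i = (x_i, sbin_s(i), sbin_s(f(i)))` (positions 1-indexed). -/
def augment {d n : ℕ} (s : ℕ) (x : Fin n → Fin d → ℝ) :
    Fin n → Fin (d + 2 * s) → ℝ := fun i k =>
  Fin.append (x i) (Fin.append (sbin s ((i : ℕ) + 1)) (sbin s (fShift ((i : ℕ) + 1))))
    (Fin.cast (by ring) k)


-- ===================== Auxiliary development =====================

lemma two_zpow_neg_eq (s : ℕ) : (2:ℝ) ^ (-(s : ℤ)) = 1 / 2 ^ s := by
  rw [zpow_neg, zpow_natCast]; ring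

lemma rdPos_grid (s : ℕ) (m : ℤ) (h0 : 0 ≤ m) (h1 : m ≤ 2 ^ (2*s) - 1) :
    rdPos s ((m : ℝ) / 2 ^ s) = (m : ℝ) / 2 ^ s := by
  have h2 : (0:ℝ) < 2 ^ s := by positivity
  have hx : (m : ℝ) / 2 ^ s * (2:ℝ) ^ s = (m : ℝ) := by field_simp
  have hceil : ⌈(m : ℝ) / 2 ^ s * (2:ℝ) ^ s - 1/2⌉ = m := by
    rw [hx, Int.ceil_eq_iff]
    constructor <;> [push_cast; push_cast] <;> linarith
  rw [rdPos, hceil]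
  have hle : (m : ℝ) ≤ (2:ℝ) ^ (2*s) - 1 := by
    have : ((m : ℝ)) ≤ ((2 ^ (2*s) - 1 : ℤ) : ℝ) := by exact_mod_cast h1
    push_cast at this
    linarith
  rw [min_eq_right hle, two_zpow_neg_eq]
  ring

lemma rd_grid (s : ℕ) (m : ℤ) (h : |m| ≤ 2 ^ (2*s) - 1) :
    rd s ((m : ℝ) / 2 ^ s) = (m : ℝ) / 2 ^ s := by
  have h2 : (0:ℝ) < 2 ^ s := by positivity
  rcases le_or_gt 0 m with hm | hm
  · rw [rd, if_pos (by positivity)]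
    exact rdPos_grid s m hm (by rwa [abs_of_nonneg hm] at h)
  · have hneg : (m:ℝ)/2^s < 0 := by
      apply div_neg_of_neg_of_pos _ h2
      exact_mod_cast hm
    rw [rd, if_neg (not_le.mpr hneg)]
    have : -((m:ℝ)/2^s) = ((-m : ℤ) : ℝ)/2^s := by push_cast; ring
    rw [this, rdPos_grid s (-m) (by omega) (by rw [abs_of_neg hm] at h; omega)]
    push_cast
    ring

lemma rd_int (s : ℕ) (m : ℤ) (h : |m| ≤ 2 ^ s - 1) : rd s (m : ℝ) = (m : ℝ) := by
  have h2 : (0:ℝ) < 2 ^ s := by positivity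
  have e : (m : ℝ) = ((m * 2 ^ s : ℤ) : ℝ) / 2 ^ s := by push_cast; field_simp
  have hb : |m * 2^s| ≤ 2^(2*s) - 1 := by
    rw [abs_mul]
    have h1 : |(2:ℤ)^s| = 2^s := abs_of_nonneg (by positivity)
    rw [h1]
    calc |m| * 2^s ≤ (2^s - 1) * 2^s := by
          apply mul_le_mul_of_nonneg_right h (by positivity)
      _ ≤ 2^(2*s) - 1 := by rw [two_mul, pow_add]; nlinarith [pow_pos (by norm_num : (0:ℤ) < 2) s]
  rw [e, rd_grid s _ hb]

lemma rd_zero (s : ℕ) : rd s 0 = 0 := by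
  have hb : |(0:ℤ)| ≤ 2 ^ (2*s) - 1 := by
    have := pow_pos (show (0:ℤ) < 2 by norm_num) (2*s); simp; omega
  have := rd_grid s 0 hb
  simpa using this

lemma rd_one (s : ℕ) (hs : 1 ≤ s) : rd s 1 = 1 := by
  have := rd_int s 1 ?_
  · simpa using this
  · have : (2:ℤ) ≤ 2 ^ s := by
      calc (2:ℤ) = 2^1 := by norm_num
        _ ≤ 2^s := pow_le_pow_right₀ (by norm_num) hs
    simp; omega

lemma rd_small (s : ℕ) (x : ℝ) (h0 : 0 ≤ x) (h1 : x * 2 ^ s ≤ 1/2) : rd s x = 0 := by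
  have h2 : (0:ℝ) < 2 ^ s := by positivity
  rw [rd, if_pos h0, rdPos]
  have hceil : ⌈x * (2:ℝ) ^ s - 1/2⌉ = 0 := by
    rw [Int.ceil_eq_iff]
    constructor
    · push_cast; nlinarith
    · push_cast; linarith
  rw [hceil]
  have hm : min ((2:ℝ)^(2*s) - 1) (((0:ℤ)):ℝ) = 0 := by
    rw [Int.cast_zero, min_eq_right]
    have : (1:ℝ) ≤ 2^(2*s) := one_le_pow₀ (by norm_num)
    linarith
  rw [hm, zero_mul]

lemma rd_mem_grid (s : ℕ) (x : ℝ) : ∃ m : ℤ, |m| ≤ 2 ^ (2*s) - 1 ∧ rd s x = (m:ℝ)/2^s := by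
  have h2 : (0:ℝ) < 2 ^ s := by positivity
  have hp : (0:ℤ) < 2 ^ (2*s) := pow_pos (by norm_num) _
  have key : ∀ y : ℝ, 0 ≤ y → ∃ m : ℤ, 0 ≤ m ∧ m ≤ 2^(2*s) - 1 ∧ rdPos s y = (m:ℝ)/2^s := by
    intro y hy
    refine ⟨min (2^(2*s) - 1) ⌈y * 2^s - 1/2⌉, ?_, min_le_left _ _, ?_⟩
    · have hc : (0:ℤ) ≤ ⌈y * 2^s - 1/2⌉ := by
        have : (-1:ℝ) < y * 2^s - 1/2 := by nlinarith
        have := Int.lt_ceil.mpr (show ((-1:ℤ):ℝ) < y * 2^s - 1/2 by push_cast; linarith)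
        omega
      have : (0:ℤ) ≤ 2^(2*s) - 1 := by omega
      exact le_min this hc
    · rw [rdPos, two_zpow_neg_eq]
      have : ((min (2^(2*s) - 1) ⌈y * 2^s - 1/2⌉ : ℤ) : ℝ)
          = min ((2:ℝ)^(2*s) - 1) ((⌈y * (2:ℝ)^s - 1/2⌉ : ℤ) : ℝ) := by
        push_cast [Int.cast_min]
        ring_nf
      rw [← this]
      ring
  rcases le_or_gt 0 x with hx | hx
  · obtain ⟨m, h0, h1, he⟩ := key x hx
    exact ⟨m, by rw [abs_of_nonneg h0]; omega, by rw [rd, if_pos hx]; exact he⟩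
  · obtain ⟨m, h0, h1, he⟩ := key (-x) (by linarith)
    refine ⟨-m, by rw [abs_neg, abs_of_nonneg h0]; omega, ?_⟩
    rw [rd, if_neg (not_le.mpr hx), he]
    push_cast
    ring

lemma Fp_grid {s : ℕ} {x : ℝ} (h : x ∈ Fp s) : ∃ m : ℤ, |m| ≤ 2 ^ (2*s) - 1 ∧ x = (m:ℝ)/2^s := by
  obtain ⟨c, k, hc, hk, he⟩ := h
  have hkz : (k:ℤ) ≤ 2^(2*s) - 1 := by
    have h2 : (1:ℕ) ≤ 2^(2*s) := Nat.one_le_two_pow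
    have hk' : (k:ℤ) ≤ ((2^(2*s):ℕ):ℤ) - 1 := by
      have := (Nat.cast_le (α := ℤ)).mpr hk
      rwa [Nat.cast_sub h2, Nat.cast_one] at this
    have hP : ((2^(2*s):ℕ):ℤ) = 2^(2*s) := by push_cast; ring
    omega
  rcases hc with rfl | rfl
  · exact ⟨k, by simpa using hkz, by rw [he, two_zpow_neg_eq]; push_cast; ring⟩
  · exact ⟨-k, by simpa using hkz, by rw [he, two_zpow_neg_eq]; push_cast; ring⟩

lemma int_mem_Fp {s : ℕ} (m : ℤ) (h : |m| ≤ 2 ^ s - 1) : (m:ℝ) ∈ Fp s := by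
  have hps : (0:ℤ) < 2^s := pow_pos (by norm_num) s
  have hb : ∀ m' : ℤ, 0 ≤ m' → m' ≤ 2^s - 1 → (m' * 2^s).toNat ≤ 2^(2*s) - 1 := by
    intro m' h0 h1
    have e1 : (m' * 2^s) ≤ 2^(2*s) - 1 := by
      calc m' * 2^s ≤ (2^s - 1) * 2^s := mul_le_mul_of_nonneg_right h1 (by positivity)
        _ ≤ 2^(2*s) - 1 := by rw [two_mul, pow_add]; nlinarith
    have h2 : (1:ℕ) ≤ 2^(2*s) := Nat.one_le_two_pow
    have hP : ((2^(2*s):ℕ):ℤ) = 2^(2*s) := by push_cast; ring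
    omega
  have hval : ∀ m' : ℤ, 0 ≤ m' → ((( m' * 2^s).toNat : ℝ)) * (2:ℝ)^(-(s:ℤ)) = (m':ℝ) := by
    intro m' h0
    have : ((( m' * 2^s).toNat : ℤ) : ℝ) = ((m' * 2^s : ℤ) : ℝ) := by
      rw [Int.toNat_of_nonneg (by positivity)]
    rw [two_zpow_neg_eq]
    push_cast at this ⊢
    rw [this]
    field_simp
  rcases le_or_gt 0 m with hm | hm
  · refine ⟨1, (m * 2^s).toNat, Or.inl rfl, hb m hm (by rwa [abs_of_nonneg hm] at h), ?_⟩
    rw [one_mul, hval m hm]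
  · refine ⟨-1, ((-m) * 2^s).toNat, Or.inr rfl, hb (-m) (by omega) (by rw [abs_of_neg hm] at h; omega), ?_⟩
    have := hval (-m) (by omega)
    push_cast at this ⊢
    nlinarith [this]

lemma foldl_rAdd_grid (s : ℕ) :
    ∀ (L : List ℤ) (a : ℤ), |a| + (L.map (fun x => |x|)).sum ≤ 2^(2*s) - 1 →
      List.foldl (rAdd s) ((a:ℝ)/2^s) (L.map fun m : ℤ => (m:ℝ)/2^s)
        = ((a + L.sum : ℤ) : ℝ)/2^s := by
  intro L
  induction L with
  | nil => intro a _; simp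
  | cons m t ih =>
    intro a hb
    simp only [List.map_cons, List.foldl_cons, List.sum_cons]
    have hsum0 : (0:ℤ) ≤ (t.map (fun x => |x|)).sum := by
      apply List.sum_nonneg
      intro x hx
      obtain ⟨y, _, rfl⟩ := List.mem_map.mp hx
      exact abs_nonneg y
    simp only [List.map_cons, List.sum_cons] at hb
    have h1 : |a + m| ≤ |a| + |m| := abs_add_le _ _
    have hs : (a:ℝ)/2^s + (m:ℝ)/2^s = ((a + m : ℤ):ℝ)/2^s := by push_cast; ring
    have hb1 : |a + m| ≤ 2^(2*s) - 1 := by linarith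
    have step : rAdd s ((a:ℝ)/2^s) ((m:ℝ)/2^s) = ((a + m : ℤ):ℝ)/2^s := by
      simp only [rAdd]
      rw [hs, rd_grid s _ hb1]
    rw [step, ih (a + m) (by linarith)]
    ring_nf

lemma rSum_grid (s : ℕ) {N : ℕ} (g : Fin N → ℝ) (m : Fin N → ℤ)
    (hg : ∀ i, g i = (m i : ℝ) / 2^s)
    (hb : (∑ i, |m i|) ≤ 2^(2*s) - 1) :
    rSum s g = ((∑ i, m i : ℤ) : ℝ) / 2^s := by
  have h0 : (0:ℝ) = ((0:ℤ):ℝ)/2^s := by simp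
  have hb' : |(0:ℤ)| + ((List.ofFn m).map (fun x => |x|)).sum ≤ 2^(2*s) - 1 := by
    have : ((List.ofFn m).map (fun x => |x|)).sum = ∑ i, |m i| := by
      rw [List.map_ofFn, List.sum_ofFn]
      rfl
    rw [this]
    simpa using hb
  have key := foldl_rAdd_grid s (List.ofFn m) 0 hb'
  have hL : (List.ofFn m).map (fun m' : ℤ => (m':ℝ)/2^s) = List.ofFn g := by
    rw [List.map_ofFn]
    congr 1
    funext i
    exact (hg i).symm
  rw [hL] at key
  rw [rSum, h0, key]
  simp [List.sum_ofFn]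

lemma rDot_grid (s : ℕ) {N : ℕ} (u v : Fin N → ℝ) (m : Fin N → ℤ)
    (hg : ∀ i, u i * v i = (m i : ℝ) / 2^s)
    (hb : (∑ i, |m i|) ≤ 2^(2*s) - 1) :
    rDot s u v = ((∑ i, m i : ℤ) : ℝ) / 2^s := by
  apply rSum_grid s _ m _ hb
  intro i
  rw [rMul, hg i, rd_grid s _ ?_]
  calc |m i| ≤ ∑ j, |m j| := Finset.single_le_sum (fun j _ => abs_nonneg (m j)) (Finset.mem_univ i)
    _ ≤ 2^(2*s) - 1 := hb

lemma rDot_int (s : ℕ) {N : ℕ} (u v : Fin N → ℝ) (m : Fin N → ℤ)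
    (hg : ∀ i, u i * v i = (m i : ℝ))
    (hb : (∑ i, |m i|) ≤ 2^s - 1) :
    rDot s u v = ((∑ i, m i : ℤ) : ℝ) := by
  have h2 : (0:ℝ) < 2^s := by positivity
  have hmul : ∀ m' : ℤ, (m':ℝ) = ((m' * 2^s : ℤ):ℝ)/2^s := by
    intro m'; push_cast; field_simp
  have habs : ∑ i, |m i * 2^s| ≤ 2^(2*s) - 1 := by
    have e1 : ∑ i, |m i * (2:ℤ)^s| = (∑ i, |m i|) * 2^s := by
      rw [Finset.sum_mul]
      apply Finset.sum_congr rfl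
      intro i _
      rw [abs_mul, abs_of_nonneg (show (0:ℤ) ≤ 2^s by positivity)]
    rw [e1]
    calc (∑ i, |m i|) * 2^s ≤ (2^s - 1) * 2^s :=
          mul_le_mul_of_nonneg_right hb (by positivity)
      _ ≤ 2^(2*s) - 1 := by rw [two_mul, pow_add]; nlinarith [pow_pos (show (0:ℤ) < 2 by norm_num) s]
  have key := rDot_grid s u v (fun i => m i * 2^s) (fun i => by rw [hg i]; exact hmul _) habs
  rw [key]
  push_cast
  rw [← Finset.sum_mul]
  field_simp

lemma rExp_pos (s : ℕ) (hs : 1 ≤ s) (z : ℝ) (hz : 0 ≤ z) : 0 < rExp s z := by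
  have h1 : (1:ℝ) ≤ Real.exp z := Real.one_le_exp hz
  have h2 : (0:ℝ) < 2^s := by positivity
  rw [rExp, rd, if_pos (by linarith), rdPos]
  have hc : (1:ℤ) ≤ ⌈Real.exp z * 2^s - 1/2⌉ := by
    apply Int.le_ceil_iff.mpr
    push_cast
    have : (2:ℝ) ≤ 2^s := by
      calc (2:ℝ) = 2^1 := by norm_num
        _ ≤ 2^s := pow_le_pow_right₀ (by norm_num) hs
    nlinarith
  have hc2 : (1:ℝ) ≤ min ((2:ℝ)^(2*s) - 1) ((⌈Real.exp z * 2^s - 1/2⌉:ℤ):ℝ) := by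
    apply le_min
    · have : (4:ℝ) ≤ 2^(2*s) := by
        calc (4:ℝ) = 2^2 := by norm_num
          _ ≤ 2^(2*s) := pow_le_pow_right₀ (by norm_num) (by omega)
      linarith
    · exact_mod_cast hc
  have h3 : (0:ℝ) < (2:ℝ)^(-(s:ℤ)) := by
    rw [two_zpow_neg_eq]; positivity
  nlinarith

-- integer-level combinatorics

def sbZ (Y : ℕ) (t : ℕ) : ℤ := if Y.testBit t then 1 else -1

lemma sbZ_abs (Y t : ℕ) : |sbZ Y t| = 1 := by
  unfold sbZ; split <;> norm_num

lemma sum_testBit : ∀ (s : ℕ) (I : ℕ), I < 2^s →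
    ∑ t ∈ Finset.range s, 2^t * (I.testBit t).toNat = I := by
  intro s
  induction s with
  | zero => intro I hI; interval_cases I; simp
  | succ s ih =>
    intro I hI
    rw [Finset.sum_range_succ']
    have he : ∀ t, I.testBit (t+1) = (I/2).testBit t := fun t => Nat.testBit_add_one I t
    have h1 : ∑ t ∈ Finset.range s, 2^(t+1) * (I.testBit (t+1)).toNat
        = 2 * ∑ t ∈ Finset.range s, 2^t * ((I/2).testBit t).toNat := by
      rw [Finset.mul_sum]
      apply Finset.sum_congr rfl
      intro t _
      rw [he t, pow_succ]
      ring
    rw [h1, ih (I/2) (by omega)]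
    have h0 : (I.testBit 0).toNat = I % 2 := by
      rw [Nat.testBit_zero]
      rcases Nat.mod_two_eq_zero_or_one I with h | h <;> simp [h]
    simp only [pow_zero, one_mul, h0]
    omega

lemma sum_geom (s : ℕ) : ∑ t ∈ Finset.range s, (2:ℤ)^t = 2^s - 1 := by
  induction s with
  | zero => simp
  | succ s ih => rw [Finset.sum_range_succ, ih]; ring

lemma K1 (s I : ℕ) (hI : I < 2^s) :
    ∑ t ∈ Finset.range s, (2:ℤ)^t * sbZ I t = 2 * I - 2^s + 1 := by
  have h1 : ∀ t, sbZ I t = 2 * ((I.testBit t).toNat : ℤ) - 1 := by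
    intro t
    rcases h : I.testBit t <;> simp [sbZ, h]
  have h2 : ∑ t ∈ Finset.range s, (2:ℤ)^t * sbZ I t
      = 2 * ∑ t ∈ Finset.range s, (2:ℤ)^t * ((I.testBit t).toNat : ℤ)
        - ∑ t ∈ Finset.range s, (2:ℤ)^t := by
    rw [Finset.mul_sum, ← Finset.sum_sub_distrib]
    apply Finset.sum_congr rfl
    intro t _
    rw [h1 t]
    ring
  have h3 : ∑ t ∈ Finset.range s, (2:ℤ)^t * ((I.testBit t).toNat : ℤ) = I := by
    have := sum_testBit s I hI
    calc ∑ t ∈ Finset.range s, (2:ℤ)^t * ((I.testBit t).toNat : ℤ)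
        = ((∑ t ∈ Finset.range s, 2^t * (I.testBit t).toNat : ℕ) : ℤ) := by push_cast; rfl
      _ = I := by rw [this]
  rw [h2, h3, sum_geom]
  ring

lemma F_eq (s : ℕ) (hs : 0 < s) (I : ℕ) (h1 : 1 ≤ I) (h2 : I < 2^s) :
    ((∑ t ∈ Finset.range s, ((2:ℤ)^t + (if t = 0 then 1 else 0)) * sbZ I t)
    - ∑ t ∈ Finset.range s, ((2:ℤ)^t - (if t = 0 then 1 else 0)) * sbZ (fShift I) t) = 2 := by
  have hf2 : fShift I < 2^s := by unfold fShift; split <;> omega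
  have expand : ∀ (Y : ℕ) (c : ℤ), Y < 2^s →
      ∑ t ∈ Finset.range s, ((2:ℤ)^t + (if t = 0 then c else 0)) * sbZ Y t
        = 2 * Y - 2^s + 1 + c * sbZ Y 0 := by
    intro Y c hY
    have e1 : ∀ t ∈ Finset.range s, ((2:ℤ)^t + (if t = 0 then c else 0)) * sbZ Y t
        = (2:ℤ)^t * sbZ Y t + (if t = 0 then c * sbZ Y t else 0) := by
      intro t _
      split <;> ring
    rw [Finset.sum_congr rfl e1, Finset.sum_add_distrib, K1 s Y hY,
      Finset.sum_ite_eq' (Finset.range s) 0 (fun t => c * sbZ Y t)]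
    simp [Finset.mem_range.mpr hs]
  have eA := expand I 1 h2
  have eB := expand (fShift I) (-1) hf2
  have eB' : ∑ t ∈ Finset.range s, ((2:ℤ)^t - (if t = 0 then 1 else 0)) * sbZ (fShift I) t
      = 2 * (fShift I) - 2^s + 1 + (-1) * sbZ (fShift I) 0 := by
    rw [← eB]
    apply Finset.sum_congr rfl
    intro t _
    split <;> ring
  rw [eA, eB']
  rcases eq_or_lt_of_le h1 with h | h
  · have hI1 : I = 1 := h.symm
    subst hI1
    have hf1 : fShift 1 = 1 := by simp [fShift]
    have hsb : sbZ 1 0 = 1 := by simp [sbZ]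
    rw [hf1, hsb]
    push_cast
    ring
  · have hI2 : 2 ≤ I := h
    have hfs : fShift I = I - 1 := by unfold fShift; split_ifs <;> omega
    rw [hfs]
    have hb : sbZ I 0 + sbZ (I-1) 0 = 0 := by
      simp only [sbZ, Nat.testBit_zero]
      rcases Nat.mod_two_eq_zero_or_one I with hm | hm
      · have : (I-1) % 2 = 1 := by omega
        simp [hm, this]
      · have : (I-1) % 2 = 0 := by omega
        simp [hm, this]
    have : (I - 1 : ℕ) = (I : ℤ) - 1 := by push_cast; omega
    rw [this]
    linarith

lemma K3_ne (s A J : ℕ) (hA : A < 2^s) (hJ : J < 2^s) (hne : A ≠ J) :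
    ∑ t ∈ Finset.range s, sbZ A t * sbZ J t ≤ (s:ℤ) - 2 := by
  have hex : ∃ t, t < s ∧ A.testBit t ≠ J.testBit t := by
    by_contra hc
    push_neg at hc
    apply hne
    apply Nat.eq_of_testBit_eq
    intro t
    rcases lt_or_ge t s with ht | ht
    · exact hc t ht
    · rw [Nat.testBit_lt_two_pow (lt_of_lt_of_le hA (Nat.pow_le_pow_right (by norm_num) ht)),
        Nat.testBit_lt_two_pow (lt_of_lt_of_le hJ (Nat.pow_le_pow_right (by norm_num) ht))]
  obtain ⟨t0, ht0, hbit⟩ := hex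
  have hle : ∀ t ∈ Finset.range s, sbZ A t * sbZ J t ≤ (if t = t0 then -1 else 1) := by
    intro t _
    by_cases h : t = t0
    · subst h
      simp only [if_pos rfl]
      unfold sbZ
      rcases h1 : A.testBit t <;> rcases h2 : J.testBit t <;> simp_all
    · rw [if_neg h]
      unfold sbZ
      rcases h1 : A.testBit t <;> rcases h2 : J.testBit t <;> norm_num
  calc ∑ t ∈ Finset.range s, sbZ A t * sbZ J t ≤ ∑ t ∈ Finset.range s, (if t = t0 then (-1:ℤ) else 1) :=
        Finset.sum_le_sum hle
    _ = (s:ℤ) - 2 := by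
      have he : ∀ t ∈ Finset.range s, (if t = t0 then (-1:ℤ) else 1) = 1 + (if t = t0 then (-2:ℤ) else 0) := by
        intro t _; split <;> ring
      have hmem : t0 ∈ Finset.range s := Finset.mem_range.mpr ht0
      rw [Finset.sum_congr rfl he, Finset.sum_add_distrib,
        Finset.sum_ite_eq' (Finset.range s) t0 (fun _ => (-2:ℤ)), if_pos hmem,
        Finset.sum_const, Finset.card_range]
      push_cast
      ring

lemma K3_eq (s A : ℕ) : ∑ t ∈ Finset.range s, sbZ A t * sbZ A t = (s:ℤ) := by
  have : ∀ t ∈ Finset.range s, sbZ A t * sbZ A t = 1 := by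
    intro t _
    unfold sbZ
    rcases h : A.testBit t <;> norm_num
  rw [Finset.sum_congr rfl this]
  simp

lemma sum_range_split (a b : ℕ) (F : ℕ → ℤ) :
    ∑ i ∈ Finset.range (a+b), F i
      = (∑ i ∈ Finset.range a, F i) + ∑ t ∈ Finset.range b, F (a + t) := by
  rw [← Finset.sum_range_add_sum_Ico F (Nat.le_add_right a b), Finset.sum_Ico_eq_sum_range]
  simp

lemma fin_sum_to_range {N : ℕ} (M : ℕ → ℤ) :
    ∑ c : Fin N, M (c:ℕ) = ∑ c ∈ Finset.range N, M c := by
  rw [Fin.sum_univ_eq_sum_range]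

lemma fin_sum_ite (N c0 : ℕ) (h : c0 < N) (v : ℤ) :
    ∑ c : Fin N, (if (c:ℕ) = c0 then v else 0) = v := by
  rw [fin_sum_to_range (fun c => if c = c0 then v else 0),
    Finset.sum_ite_eq' (Finset.range N) c0 (fun _ => v), if_pos (Finset.mem_range.mpr h)]

lemma sum_abs_ite {α : Type*} [Fintype α] [DecidableEq α] (b : α) (v : ℤ) :
    ∑ a : α, |if a = b then v else 0| = |v| := by
  have he : ∀ a : α, |if a = b then v else 0| = if a = b then |v| else 0 := by
    intro a; split <;> simp
  rw [Finset.sum_congr rfl (fun a _ => he a),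
    Finset.sum_ite_eq' Finset.univ b (fun _ => |v|), if_pos (Finset.mem_univ b)]

lemma sum_ite_val {α : Type*} [Fintype α] [DecidableEq α] (b : α) (v : ℤ) :
    ∑ a : α, (if a = b then v else 0) = v := by
  rw [Finset.sum_ite_eq' Finset.univ b (fun _ => v), if_pos (Finset.mem_univ b)]

def kmid (t : ℕ) : ℤ := if t = 0 then -1 else -(2^(t-1))
def khi (t : ℕ) : ℤ := if t = 0 then 0 else 2^(t-1)

def MqF (d s : ℕ) (Ee : ℤ) (I A c : ℕ) : ℤ :=
  if c < d then 0
  else if c < d+s then (Ee*2^(c-d) + if c-d = 0 then Ee else 0) * sbZ I (c-d)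
  else (-(Ee*2^(c-d-s)) + if c-d-s = 0 then Ee else 0) * sbZ A (c-d-s)

def MkF (d s : ℕ) (J B c : ℕ) : ℤ :=
  if c < d then 0
  else if c < d+s then kmid (c-d) * sbZ J (c-d)
  else khi (c-d-s) * sbZ B (c-d-s)

lemma Mq_sum (d s : ℕ) (Ee : ℤ) (I : ℕ)
    (hF : ((∑ t ∈ Finset.range s, ((2:ℤ)^t + (if t = 0 then 1 else 0)) * sbZ I t)
      - ∑ t ∈ Finset.range s, ((2:ℤ)^t - (if t = 0 then 1 else 0)) * sbZ (fShift I) t) = 2) :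
    ∑ c ∈ Finset.range (d+2*s), MqF d s Ee I (fShift I) c = 2*Ee := by
  rw [sum_range_split]
  have h1 : ∑ c ∈ Finset.range d, MqF d s Ee I (fShift I) c = 0 := by
    apply Finset.sum_eq_zero
    intro c hc
    have := Finset.mem_range.mp hc
    simp [MqF, this]
  rw [h1, zero_add, show 2*s = s + s by ring, sum_range_split]
  have h2 : ∀ t ∈ Finset.range s, MqF d s Ee I (fShift I) (d + t)
      = Ee * (((2:ℤ)^t + (if t = 0 then 1 else 0)) * sbZ I t) := by
    intro t ht
    have ht' := Finset.mem_range.mp ht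
    have e1 : d + t - d = t := by omega
    rw [MqF, if_neg (by omega), if_pos (by omega), e1]
    split_ifs <;> ring
  have h3 : ∀ t ∈ Finset.range s, MqF d s Ee I (fShift I) (d + s + t)
      = -(Ee * (((2:ℤ)^t - (if t = 0 then 1 else 0)) * sbZ (fShift I) t)) := by
    intro t ht
    have ht' := Finset.mem_range.mp ht
    have e1 : d + s + t - d - s = t := by omega
    rw [MqF, if_neg (by omega), if_neg (by omega), e1]
    split_ifs <;> ring
  have h4 : ∀ t ∈ Finset.range s, MqF d s Ee I (fShift I) (d + (s + t))
      = MqF d s Ee I (fShift I) (d + s + t) := by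
    intro t _; rw [show d + (s+t) = d + s + t by ring]
  rw [Finset.sum_congr rfl h2, Finset.sum_congr rfl h4, Finset.sum_congr rfl h3,
    ← Finset.mul_sum]
  have e2 : (∑ t ∈ Finset.range s, -(Ee * (((2:ℤ)^t - (if t = 0 then 1 else 0)) * sbZ (fShift I) t)))
      = -(Ee * ∑ t ∈ Finset.range s, ((2:ℤ)^t - (if t = 0 then 1 else 0)) * sbZ (fShift I) t) := by
    rw [Finset.sum_neg_distrib, ← Finset.mul_sum]
  rw [e2]
  linear_combination Ee * hF

lemma Mk_sum (d s : ℕ) (J : ℕ)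
    (hF : ((∑ t ∈ Finset.range s, ((2:ℤ)^t + (if t = 0 then 1 else 0)) * sbZ J t)
      - ∑ t ∈ Finset.range s, ((2:ℤ)^t - (if t = 0 then 1 else 0)) * sbZ (fShift J) t) = 2) :
    ∑ c ∈ Finset.range (d+2*s), MkF d s J (fShift J) c = -1 := by
  rw [sum_range_split]
  have h1 : ∑ c ∈ Finset.range d, MkF d s J (fShift J) c = 0 := by
    apply Finset.sum_eq_zero
    intro c hc
    have := Finset.mem_range.mp hc
    simp [MkF, this]
  rw [h1, zero_add, show 2*s = s + s by ring, sum_range_split]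
  have h2 : ∀ t ∈ Finset.range s, (2:ℤ) * MkF d s J (fShift J) (d + t)
      = -(((2:ℤ)^t + (if t = 0 then 1 else 0)) * sbZ J t) := by
    intro t ht
    have e1 : d + t - d = t := by omega
    rw [MkF, if_neg (by omega), if_pos (by have := Finset.mem_range.mp ht; omega), e1]
    rcases t with _ | t'
    · simp only [kmid, reduceIte, pow_zero]
      ring
    · have e : kmid (t'+1) = -(2^t') := by simp [kmid]
      rw [e, if_neg (Nat.succ_ne_zero t')]
      have hp : (2:ℤ)*2^t' = 2^(t'+1) := by rw [pow_succ]; ring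
      linear_combination (-(sbZ J (t'+1))) * hp
  have h3 : ∀ t ∈ Finset.range s, (2:ℤ) * MkF d s J (fShift J) (d + (s + t))
      = ((2:ℤ)^t - (if t = 0 then 1 else 0)) * sbZ (fShift J) t := by
    intro t ht
    have e1 : d + (s + t) - d - s = t := by omega
    rw [MkF, if_neg (by omega), if_neg (by omega), e1]
    rcases t with _ | t'
    · simp [khi]
    · have e : khi (t'+1) = 2^t' := by simp [khi]
      rw [e, if_neg (Nat.succ_ne_zero t')]
      have hp : (2:ℤ)*2^t' = 2^(t'+1) := by rw [pow_succ]; ring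
      linear_combination (sbZ (fShift J) (t'+1)) * hp
  have key : (2:ℤ) * ((∑ t ∈ Finset.range s, MkF d s J (fShift J) (d + t))
      + ∑ t ∈ Finset.range s, MkF d s J (fShift J) (d + (s + t))) = -2 := by
    rw [mul_add, Finset.mul_sum, Finset.mul_sum,
      Finset.sum_congr rfl h2, Finset.sum_congr rfl h3, Finset.sum_neg_distrib]
    linarith [hF]
  linarith [key]

lemma MZ_sum (s DD : ℕ) (Ee Cc : ℤ) (A J : ℕ) :
    ∑ c ∈ Finset.range (s+1+DD),
        (if c = 0 then -(2*Ee) else if c < s+1 then Cc * (sbZ A (c-1) * sbZ J (c-1)) else 0)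
      = -(2*Ee) + Cc * ∑ t ∈ Finset.range s, sbZ A t * sbZ J t := by
  rw [sum_range_split]
  have htail : ∑ t ∈ Finset.range DD,
      (if s+1+t = 0 then -(2*Ee) else if s+1+t < s+1 then Cc * (sbZ A (s+1+t-1) * sbZ J (s+1+t-1)) else 0) = 0 := by
    apply Finset.sum_eq_zero
    intro t _
    rw [if_neg (by omega), if_neg (by omega)]
  have hmid : ∀ t ∈ Finset.range s,
      (if t+1 = 0 then -(2*Ee) else if t+1 < s+1 then Cc * (sbZ A (t+1-1) * sbZ J (t+1-1)) else 0)
        = Cc * (sbZ A t * sbZ J t) := by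
    intro t ht
    have ht' := Finset.mem_range.mp ht
    rw [if_neg (by omega), if_pos (by omega), show t+1-1 = t by omega]
  rw [htail, add_zero, Finset.sum_range_succ', Finset.sum_congr rfl hmid, ← Finset.mul_sum]
  simp only [reduceIte]
  ring

lemma augment_eval {d n : ℕ} (s : ℕ) (x : Fin n → Fin d → ℝ) (i : Fin n) (k : Fin (d + 2*s)) :
    augment s x i k =
      if h : (k:ℕ) < d then x i ⟨k, h⟩
      else if h2 : (k:ℕ) < d + s then (if ((i:ℕ)+1).testBit ((k:ℕ) - d) then 1 else -1)
      else (if (fShift ((i:ℕ)+1)).testBit ((k:ℕ) - d - s) then 1 else -1) := by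
  unfold augment
  rcases lt_or_ge (k:ℕ) d with h | h
  · rw [dif_pos h]
    have e0 : (Fin.cast (by ring : d + 2*s = d + (s + s)) k) = Fin.castAdd (s+s) ⟨(k:ℕ), h⟩ := by
      apply Fin.ext
      simp
    rw [e0, Fin.append_left]
  · rw [dif_neg (not_lt.mpr h)]
    have hk := k.2
    rcases lt_or_ge (k:ℕ) (d + s) with h2 | h2
    · rw [dif_pos h2]
      have e1 : (Fin.cast (by ring : d + 2*s = d + (s + s)) k)
          = Fin.natAdd d (Fin.castAdd s ⟨(k:ℕ) - d, by omega⟩) := by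
        apply Fin.ext
        simp
        omega
      rw [e1, Fin.append_right, Fin.append_left, sbin]
    · rw [dif_neg (not_lt.mpr h2)]
      have e1 : (Fin.cast (by ring : d + 2*s = d + (s + s)) k)
          = Fin.natAdd d (Fin.natAdd s ⟨(k:ℕ) - d - s, by omega⟩) := by
        apply Fin.ext
        simp
        omega
      rw [e1, Fin.append_right, Fin.append_right, sbin]

lemma fin_sum_abs_ite_le (N c0 : ℕ) (v : ℤ) :
    ∑ c : Fin N, |if (c:ℕ) = c0 then v else 0| ≤ |v| := by
  have he : ∀ c : Fin N, |if (c:ℕ) = c0 then v else 0| = if (c:ℕ) = c0 then |v| else 0 := by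
    intro c; split <;> simp
  rw [Finset.sum_congr rfl (fun c _ => he c),
    fin_sum_to_range (fun c => if c = c0 then |v| else 0),
    Finset.sum_ite_eq' (Finset.range N) c0 (fun _ => |v|)]
  split
  · exact le_refl _
  · exact abs_nonneg v

def QMat (d s : ℕ) (Ee Cc : ℤ) : Matrix (Fin (s+1+d)) (Fin (d+2*s)) ℝ := fun l c =>
  if (l:ℕ) = 0 then
    (if (c:ℕ) < d then 0
     else if (c:ℕ) < d + s then ((Ee*2^((c:ℕ)-d) + if (c:ℕ)-d = 0 then Ee else 0 : ℤ) : ℝ)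
     else ((-(Ee*2^((c:ℕ)-d-s)) + if (c:ℕ)-d-s = 0 then Ee else 0 : ℤ) : ℝ))
  else if (l:ℕ) < s+1 then (if (c:ℕ) = d+s+((l:ℕ)-1) then ((Cc : ℤ) : ℝ) else 0)
  else 0

def KMat (d s : ℕ) : Matrix (Fin (s+1+d)) (Fin (d+2*s)) ℝ := fun l c =>
  if (l:ℕ) = 0 then
    (if (c:ℕ) < d then 0
     else if (c:ℕ) < d + s then ((kmid ((c:ℕ)-d) : ℤ) : ℝ)
     else ((khi ((c:ℕ)-d-s) : ℤ) : ℝ))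
  else if (l:ℕ) < s+1 then (if (c:ℕ) = d+((l:ℕ)-1) then 1 else 0)
  else 0

def VMat (d s : ℕ) : Matrix (Fin (s+1+d)) (Fin (d+2*s)) ℝ := fun l c =>
  if s+1 ≤ (l:ℕ) ∧ (c:ℕ) = (l:ℕ)-(s+1) then 1 else 0

lemma bigbound (d s : ℕ) (hd : 1 ≤ d) (hs : 1 ≤ s) :
    (d + 2*s + 1) * ((16*(d+2*s+2)*(s+1) + 1) * (2*s+2) * 2^s) + 1
      ≤ 2^(16*(d+2*s+2)*(s+1)) := by
  set P := d + 2*s + 2 with hP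
  set Q := s + 1 with hQ
  have hP5 : 5 ≤ P := by omega
  have hQ2 : 2 ≤ Q := by omega
  have hPpow : P ≤ 2^P := (Nat.lt_two_pow_self (n := P)).le
  have hQpow : Q ≤ 2^Q := (Nat.lt_two_pow_self (n := Q)).le
  have hPQpow : P*Q ≤ 2^(P*Q) := (Nat.lt_two_pow_self).le
  have h1 : d + 2*s + 1 ≤ 2^P := by omega
  have h2 : 16*P*Q + 1 ≤ 2^5 * 2^(P*Q) := by
    have h2a : 16*P*Q + 1 ≤ 32*(P*Q) := by nlinarith
    calc 16*P*Q + 1 ≤ 32*(P*Q) := h2a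
      _ ≤ 32 * 2^(P*Q) := by nlinarith
      _ = 2^5 * 2^(P*Q) := by norm_num
  have h3 : 2*s+2 ≤ 2^(Q+1) := by
    have he : 2*s+2 = 2*Q := by omega
    rw [he, pow_succ]
    nlinarith
  have h4 : 2^s ≤ 2^Q := Nat.pow_le_pow_right (by norm_num) (by omega)
  have main : (d + 2*s + 1) * ((16*P*Q + 1) * (2*s+2) * 2^s)
      ≤ 2^P * ((2^5 * 2^(P*Q)) * 2^(Q+1) * 2^Q) := by
    apply Nat.mul_le_mul h1
    apply Nat.mul_le_mul (Nat.mul_le_mul h2 h3) h4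
  have hexp : 2^P * ((2^5 * 2^(P*Q)) * 2^(Q+1) * 2^Q) = 2^(P + (5 + P*Q + (Q+1) + Q)) := by
    rw [pow_add, pow_add, pow_add, pow_add, pow_add]
    ring
  have hexple : P + (5 + P*Q + (Q+1) + Q) + 1 ≤ 16*(P*Q) := by nlinarith
  calc (d + 2*s + 1) * ((16*P*Q + 1) * (2*s+2) * 2^s) + 1
      ≤ 2^(P + (5 + P*Q + (Q+1) + Q)) + 1 := by rw [← hexp]; omega
    _ ≤ 2^(P + (5 + P*Q + (Q+1) + Q)) + 2^(P + (5 + P*Q + (Q+1) + Q)) := by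
        have := Nat.one_le_two_pow (n := P + (5 + P*Q + (Q+1) + Q))
        omega
    _ = 2^(P + (5 + P*Q + (Q+1) + Q) + 1) := by rw [pow_succ]; ring
    _ ≤ 2^(16*(P*Q)) := Nat.pow_le_pow_right (by norm_num) hexple
    _ = 2^(16*P*Q) := by rw [mul_assoc]

lemma exp_bound (s' : ℕ) : Real.exp (-(2*((s':ℝ)+1))) * 2^s' ≤ 1/2 := by
  have hE : (2:ℝ)^(s'+1) ≤ Real.exp (2*((s':ℝ)+1)) := by
    have e1 : Real.exp (2*((s':ℝ)+1)) = Real.exp 1 ^ (2*(s'+1)) := by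
      rw [← Real.exp_nat_mul]
      congr 1
      push_cast
      ring
    have e2 : (2:ℝ)^(s'+1) ≤ (2:ℝ)^(2*(s'+1)) :=
      pow_le_pow_right₀ (by norm_num) (by omega)
    have e3 : (2:ℝ)^(2*(s'+1)) ≤ Real.exp 1 ^ (2*(s'+1)) := by
      apply pow_le_pow_left₀ (by norm_num)
      have := Real.exp_one_gt_d9
      linarith
    rw [e1]
    linarith
  have hEpos : (0:ℝ) < Real.exp (2*((s':ℝ)+1)) := Real.exp_pos _
  rw [Real.exp_neg]
  rw [inv_mul_le_iff₀ hEpos]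
  calc (2:ℝ)^s' = 2^(s'+1) * (1/2) := by rw [pow_succ]; ring
    _ ≤ Real.exp (2*((s':ℝ)+1)) * (1/2) := by
        apply mul_le_mul_of_nonneg_right hE (by norm_num)

lemma fShift_sub_lt {n : ℕ} (i : Fin n) : fShift ((i : ℕ) + 1) - 1 < n := by
  have hi := i.2; unfold fShift; split <;> omega

set_option maxHeartbeats 2000000 in
/-- **The shift map `SHIFT(x₁, x₂, …, x_n) = (x₁, x₁, x₂, …, x_{n−1})` is realized by a
single finite-precision causal self-attention head.** For `d, n ∈ ℕ+` and
`s = ⌈log₂(n+1)⌉`, there are a precision `s'` and parameters of a single `s'`-precision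
causal self-attention head on embedding dimension `d + 2s` such that on the augmented
sequence `x'_i = (x_i, sbin_s(i), sbin_s(f(i)))` (for any `x₁,…,x_n ∈ 𝔽_{s'}^d`) the head
outputs `(x_{f(i)}, 0^{2s})` at every position `i`. -/
theorem shift_by_attention_head :
    ∀ (d n : ℕ+),
      ∃ (s' dA : ℕ)
        (p : AttnParams ((d : ℕ) + 2 * Nat.clog 2 ((n : ℕ) + 1)) dA),
        p.inFp s' ∧
        ∀ x : Fin (n : ℕ) → Fin (d : ℕ) → ℝ,
          (∀ i k, x i k ∈ Fp s') →
          ∀ (i : Fin (n : ℕ)) (k : Fin ((d : ℕ) + 2 * Nat.clog 2 ((n : ℕ) + 1))),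
            attnHead s' p (augment (Nat.clog 2 ((n : ℕ) + 1)) x) i k
              = if h : (k : ℕ) < (d : ℕ) then
                  x ⟨fShift ((i : ℕ) + 1) - 1, by
                      have hi := i.2; unfold fShift; split <;> omega⟩
                    ⟨(k : ℕ), h⟩
                else 0 := by
  intro d n
  have hd1 : 1 ≤ (d:ℕ) := d.2
  have hn1 : 1 ≤ (n:ℕ) := n.2
  obtain ⟨s, hsdef⟩ : ∃ v, Nat.clog 2 ((n:ℕ)+1) = v := ⟨_, rfl⟩
  show ∃ (s' dA : ℕ)
        (p : AttnParams ((d : ℕ) + 2 * Nat.clog 2 ((n : ℕ) + 1)) dA),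
        p.inFp s' ∧
        ∀ x : Fin (n : ℕ) → Fin (d : ℕ) → ℝ,
          (∀ i k, x i k ∈ Fp s') →
          ∀ (i : Fin (n : ℕ)) (k : Fin ((d : ℕ) + 2 * Nat.clog 2 ((n : ℕ) + 1))),
            attnHead s' p (augment (Nat.clog 2 ((n : ℕ) + 1)) x) i k
              = if h : (k : ℕ) < (d : ℕ) then
                  x ⟨fShift ((i : ℕ) + 1) - 1, fShift_sub_lt i⟩
                    ⟨(k : ℕ), h⟩
                else 0
  rw [hsdef]
  have hs1 : 1 ≤ s := by
    rw [← hsdef]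
    exact Nat.clog_pos (by norm_num) (by omega)
  have hn2 : (n:ℕ) < 2^s := by
    have h : (n:ℕ)+1 ≤ 2^(Nat.clog 2 ((n:ℕ)+1)) := Nat.le_pow_clog (by norm_num) _
    rw [hsdef] at h
    omega
  obtain ⟨s', hs'def⟩ : ∃ v, 16*((d:ℕ)+2*s+2)*(s+1) = v := ⟨_, rfl⟩
  have hs'1 : 1 ≤ s' := by
    rw [← hs'def]
    have : 0 < 16*((d:ℕ)+2*s+2)*(s+1) := by positivity
    omega
  obtain ⟨Cc, hCdef⟩ : ∃ v : ℤ, 2*((s':ℤ)+1) = v := ⟨_, rfl⟩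
  obtain ⟨Ee, hEdef⟩ : ∃ v : ℤ, ((s':ℤ)+1)*((s:ℤ)-1) = v := ⟨_, rfl⟩
  have hsZ : (1:ℤ) ≤ (s:ℤ) := by exact_mod_cast hs1
  have hs'Z : (1:ℤ) ≤ (s':ℤ) := by exact_mod_cast hs'1
  have hEe0 : 0 ≤ Ee := by rw [← hEdef]; nlinarith
  have hCc0 : 0 ≤ Cc := by rw [← hCdef]; nlinarith
  have hEC : 2*Ee = Cc*((s:ℤ)-1) := by rw [← hEdef, ← hCdef]; ring
  have hpow1 : (1:ℤ) ≤ 2^s := one_le_pow₀ (by norm_num)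
  have hpowG : (1:ℤ) ≤ 2^(2*s') := one_le_pow₀ (by norm_num)
  have hMnat := bigbound (d:ℕ) s hd1 hs1
  rw [hs'def] at hMnat
  have hM : (((d:ℕ):ℤ)+2*(s:ℤ)+1) * (((s':ℤ)+1)*(2*(s:ℤ)+2)*2^s) ≤ 2^(s':ℕ) - 1 := by
    have h' := (Nat.cast_le (α := ℤ)).mpr hMnat
    push_cast at h'
    linarith
  have hpowS' : (1:ℤ) ≤ 2^(s':ℕ) := one_le_pow₀ (by norm_num)
  have hIntLe : ∀ (v : ℤ), 0 ≤ v → v ≤ ((s':ℤ)+1)*(2*(s:ℤ)+2)*2^s → v ≤ 2^(s':ℕ) - 1 := by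
    intro v h0 hv
    have h1 : (1:ℤ) * (((s':ℤ)+1)*(2*(s:ℤ)+2)*2^s)
        ≤ (((d:ℕ):ℤ)+2*(s:ℤ)+1) * (((s':ℤ)+1)*(2*(s:ℤ)+2)*2^s) := by
      apply mul_le_mul_of_nonneg_right _ (by positivity)
      push_cast
      linarith
    linarith [hM]
  have hBound : ∀ {N : ℕ} (m : Fin N → ℤ) (pb : ℤ), (∀ c, |m c| ≤ pb) → 0 ≤ pb →
      (N:ℤ) ≤ ((d:ℕ):ℤ)+2*(s:ℤ)+1 → pb ≤ ((s':ℤ)+1)*(2*(s:ℤ)+2)*2^s →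
      (∑ c, |m c|) ≤ 2^(s':ℕ) - 1 := by
    intro N m pb hpb hpb0 hN hpbB
    calc (∑ c, |m c|) ≤ ∑ _c : Fin N, pb := Finset.sum_le_sum (fun c _ => hpb c)
      _ = (N:ℤ) * pb := by rw [Finset.sum_const, Finset.card_univ, Fintype.card_fin, nsmul_eq_mul]
      _ ≤ (((d:ℕ):ℤ)+2*(s:ℤ)+1) * (((s':ℤ)+1)*(2*(s:ℤ)+2)*2^s) := by
          apply mul_le_mul hN hpbB hpb0 (by positivity)
      _ ≤ 2^(s':ℕ) - 1 := hM
  have hPB : Ee*2^s + Ee ≤ ((s':ℤ)+1)*(2*(s:ℤ)+2)*2^s := by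
    rw [← hEdef]
    nlinarith
  have hPBz : 2*Ee + Cc ≤ ((s':ℤ)+1)*(2*(s:ℤ)+2)*2^s := by
    rw [← hEdef, ← hCdef]
    nlinarith
  have hPBc : Cc ≤ ((s':ℤ)+1)*(2*(s:ℤ)+2)*2^s := by
    rw [← hCdef]
    nlinarith
  have hPB1 : (1:ℤ) ≤ ((s':ℤ)+1)*(2*(s:ℤ)+2)*2^s := by nlinarith
  have hPB2s : (2:ℤ)^s ≤ ((s':ℤ)+1)*(2*(s:ℤ)+2)*2^s := by
    have h4 := mul_le_mul_of_nonneg_right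
      (show (1:ℤ) ≤ ((s':ℤ)+1)*(2*(s:ℤ)+2) by nlinarith)
      (show (0:ℤ) ≤ 2^s by positivity)
    linarith
  refine ⟨s', s+1+(d:ℕ), ⟨QMat (d:ℕ) s Ee Cc, KMat (d:ℕ) s, VMat (d:ℕ) s, VMat (d:ℕ) s⟩,
    ⟨?_, ?_, ?_, ?_⟩, ?_⟩
  · -- WQ entries in Fp
    intro l c
    show QMat (d:ℕ) s Ee Cc l c ∈ Fp s'
    have hc2 := c.2
    have hent : ∀ m : ℤ, |m| ≤ 2^(s':ℕ) - 1 → ((m:ℤ):ℝ) ∈ Fp s' := fun m h => int_mem_Fp m h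
    have hzero : (0:ℝ) ∈ Fp s' := by
      have := hent 0 (by rw [abs_zero]; linarith [hpowS'])
      simpa using this
    have hEs0 : (0:ℤ) ≤ Ee * 2^s := mul_nonneg hEe0 (by positivity)
    unfold QMat
    split_ifs with g1 g2 g3 g4 g5 g6 g7
    · exact hzero
    · apply hent
      have hpt : (2:ℤ)^((c:ℕ)-(d:ℕ)) ≤ 2^s := pow_le_pow_right₀ (by norm_num) (by omega)
      have hmm := mul_le_mul_of_nonneg_left hpt hEe0
      have hmm0 : (0:ℤ) ≤ Ee * 2^((c:ℕ)-(d:ℕ)) := mul_nonneg hEe0 (by positivity)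
      rw [abs_of_nonneg (by linarith)]
      apply hIntLe _ (by linarith) (by linarith [hPB])
    · apply hent
      have hpt : (2:ℤ)^((c:ℕ)-(d:ℕ)) ≤ 2^s := pow_le_pow_right₀ (by norm_num) (by omega)
      have hmm := mul_le_mul_of_nonneg_left hpt hEe0
      have hmm0 : (0:ℤ) ≤ Ee * 2^((c:ℕ)-(d:ℕ)) := mul_nonneg hEe0 (by positivity)
      rw [abs_of_nonneg (by linarith)]
      apply hIntLe _ (by linarith) (by linarith [hPB])
    · apply hent
      have hpt : (2:ℤ)^((c:ℕ)-(d:ℕ)-s) ≤ 2^s := pow_le_pow_right₀ (by norm_num) (by omega)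
      have hmm := mul_le_mul_of_nonneg_left hpt hEe0
      have hmm0 : (0:ℤ) ≤ Ee * 2^((c:ℕ)-(d:ℕ)-s) := mul_nonneg hEe0 (by positivity)
      have habs : |(-(Ee*2^((c:ℕ)-(d:ℕ)-s)) + Ee : ℤ)| ≤ Ee*2^s + Ee := by
        rw [abs_le]
        constructor <;> linarith
      exact le_trans habs (hIntLe _ (by linarith) hPB)
    · apply hent
      have hpt : (2:ℤ)^((c:ℕ)-(d:ℕ)-s) ≤ 2^s := pow_le_pow_right₀ (by norm_num) (by omega)
      have hmm := mul_le_mul_of_nonneg_left hpt hEe0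
      have hmm0 : (0:ℤ) ≤ Ee * 2^((c:ℕ)-(d:ℕ)-s) := mul_nonneg hEe0 (by positivity)
      have habs : |(-(Ee*2^((c:ℕ)-(d:ℕ)-s)) + 0 : ℤ)| ≤ Ee*2^s + Ee := by
        rw [abs_le]
        constructor <;> linarith
      exact le_trans habs (hIntLe _ (by linarith) hPB)
    · apply hent
      rw [abs_of_nonneg hCc0]
      exact hIntLe _ hCc0 hPBc
    · exact hzero
    · exact hzero
  · -- WK entries in Fp
    intro l c
    show KMat (d:ℕ) s l c ∈ Fp s'
    have hc2 := c.2
    have hent : ∀ m : ℤ, |m| ≤ 2^(s':ℕ) - 1 → ((m:ℤ):ℝ) ∈ Fp s' := fun m h => int_mem_Fp m h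
    have hzero : (0:ℝ) ∈ Fp s' := by
      have := hent 0 (by rw [abs_zero]; linarith [hpowS'])
      simpa using this
    have hone : (1:ℝ) ∈ Fp s' := by
      have h2 : (2:ℤ) ≤ 2^(s':ℕ) := by
        calc (2:ℤ) = 2^1 := by norm_num
          _ ≤ 2^(s':ℕ) := pow_le_pow_right₀ (by norm_num) hs'1
      have := hent 1 (by rw [abs_one]; linarith [h2])
      simpa using this
    have hb2s : (2:ℤ)^s ≤ 2^(s':ℕ) - 1 := hIntLe _ (by positivity) hPB2s
    have hsmall : ∀ t : ℕ, t ≤ s → |kmid t| ≤ 2^(s':ℕ) - 1 ∧ |khi t| ≤ 2^(s':ℕ) - 1 := by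
      intro t ht
      have hpt : (2:ℤ)^(t-1) ≤ 2^s := pow_le_pow_right₀ (by norm_num) (by omega)
      have hp0 : (0:ℤ) < 2^(t-1) := pow_pos (by norm_num) _
      constructor
      · unfold kmid
        split_ifs
        · rw [abs_neg, abs_one]
          linarith [hpowS']
        · rw [abs_neg, abs_of_nonneg (le_of_lt hp0)]
          linarith
      · unfold khi
        split_ifs
        · rw [abs_zero]
          linarith [hpowS']
        · rw [abs_of_nonneg (le_of_lt hp0)]
          linarith
    unfold KMat
    split_ifs with g1 g2 g3 g4
    · exact hzero
    · exact hent _ (hsmall _ (by omega)).1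
    · exact hent _ (hsmall _ (by omega)).2
    · exact hone
    · exact hzero
    · exact hzero
  · -- WV entries in Fp
    intro l c
    show VMat (d:ℕ) s l c ∈ Fp s'
    have hent : ∀ m : ℤ, |m| ≤ 2^(s':ℕ) - 1 → ((m:ℤ):ℝ) ∈ Fp s' := fun m h => int_mem_Fp m h
    have hzero : (0:ℝ) ∈ Fp s' := by
      have := hent 0 (by rw [abs_zero]; linarith [hpowS'])
      simpa using this
    have hone : (1:ℝ) ∈ Fp s' := by
      have h2 : (2:ℤ) ≤ 2^(s':ℕ) := by
        calc (2:ℤ) = 2^1 := by norm_num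
          _ ≤ 2^(s':ℕ) := pow_le_pow_right₀ (by norm_num) hs'1
      have := hent 1 (by rw [abs_one]; linarith [h2])
      simpa using this
    unfold VMat
    split_ifs
    · exact hone
    · exact hzero
  · -- WO entries in Fp
    intro l c
    show VMat (d:ℕ) s l c ∈ Fp s'
    have hent : ∀ m : ℤ, |m| ≤ 2^(s':ℕ) - 1 → ((m:ℤ):ℝ) ∈ Fp s' := fun m h => int_mem_Fp m h
    have hzero : (0:ℝ) ∈ Fp s' := by
      have := hent 0 (by rw [abs_zero]; linarith [hpowS'])
      simpa using this
    have hone : (1:ℝ) ∈ Fp s' := by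
      have h2 : (2:ℤ) ≤ 2^(s':ℕ) := by
        calc (2:ℤ) = 2^1 := by norm_num
          _ ≤ 2^(s':ℕ) := pow_le_pow_right₀ (by norm_num) hs'1
      have := hent 1 (by rw [abs_one]; linarith [h2])
      simpa using this
    unfold VMat
    split_ifs
    · exact hone
    · exact hzero
  · -- main claim
    intro x hx i k
    simp only [attnHead]
    set A := fShift ((i:ℕ)+1) with hAdef
    have hA1 : 1 ≤ A := by rw [hAdef]; unfold fShift; split_ifs <;> omega
    have hAle : A ≤ (i:ℕ)+1 := by rw [hAdef]; unfold fShift; split_ifs <;> omega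
    have hiN : (i:ℕ) < (n:ℕ) := i.2
    have hA2 : A < 2^s := by omega
    have hAn : A - 1 < (n:ℕ) := by omega
    have hAi : A - 1 < (i:ℕ)+1 := by omega
    set jst : Fin ((i:ℕ)+1) := ⟨A-1, hAi⟩ with hjst
    have hIi2 : (i:ℕ)+1 < 2^s := by omega
    -- query vector
    have hq : ∀ l : Fin (s+1+(d:ℕ)), rMulVec s' (QMat (d:ℕ) s Ee Cc) (augment s x i) l
        = ((if (l:ℕ) = 0 then 2*Ee else if (l:ℕ) < s+1 then Cc * sbZ A ((l:ℕ)-1) else 0 : ℤ) : ℝ) := by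
      intro l
      show rDot s' (QMat (d:ℕ) s Ee Cc l) (augment s x i) = _
      by_cases hl0 : (l:ℕ) = 0
      · rw [if_pos hl0]
        have hgq : ∀ c : Fin ((d:ℕ)+2*s), QMat (d:ℕ) s Ee Cc l c * augment s x i c
            = ((MqF (d:ℕ) s Ee ((i:ℕ)+1) A (c:ℕ) : ℤ) : ℝ) := by
          intro c
          rw [augment_eval]
          unfold QMat MqF
          rw [if_pos hl0]
          rcases lt_or_ge (c:ℕ) (d:ℕ) with h1 | h1
          · rw [dif_pos h1, if_pos h1, if_pos h1]
            simp
          · rw [dif_neg (not_lt.mpr h1), if_neg (not_lt.mpr h1), if_neg (not_lt.mpr h1)]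
            rcases lt_or_ge (c:ℕ) ((d:ℕ)+s) with h2 | h2
            · rw [dif_pos h2, if_pos h2, if_pos h2]
              rcases htb : ((i:ℕ)+1).testBit ((c:ℕ)-(d:ℕ)) <;>
                simp [sbZ, htb] <;> push_cast <;> ring
            · rw [dif_neg (not_lt.mpr h2), if_neg (not_lt.mpr h2), if_neg (not_lt.mpr h2)]
              rcases htb : A.testBit ((c:ℕ)-(d:ℕ)-s) <;>
                simp [sbZ, htb] <;> push_cast <;> ring
        have hbq : (∑ c : Fin ((d:ℕ)+2*s), |MqF (d:ℕ) s Ee ((i:ℕ)+1) A (c:ℕ)|)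
            ≤ 2^(s':ℕ) - 1 := by
          have hEs0 : (0:ℤ) ≤ Ee * 2^s := mul_nonneg hEe0 (by positivity)
          apply hBound _ (Ee*2^s + Ee) ?_ (by linarith) (by push_cast; linarith) hPB
          intro c
          have hc2 := c.2
          unfold MqF
          split_ifs with g1 g2 g3 g4
          · simp
            linarith
          · have hpt : (2:ℤ)^((c:ℕ)-(d:ℕ)) ≤ 2^s := pow_le_pow_right₀ (by norm_num) (by omega)
            have hmm := mul_le_mul_of_nonneg_left hpt hEe0
            have hmm0 : (0:ℤ) ≤ Ee * 2^((c:ℕ)-(d:ℕ)) := mul_nonneg hEe0 (by positivity)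
            rw [abs_mul, sbZ_abs, mul_one, abs_of_nonneg (by linarith)]
            linarith
          · have hpt : (2:ℤ)^((c:ℕ)-(d:ℕ)) ≤ 2^s := pow_le_pow_right₀ (by norm_num) (by omega)
            have hmm := mul_le_mul_of_nonneg_left hpt hEe0
            have hmm0 : (0:ℤ) ≤ Ee * 2^((c:ℕ)-(d:ℕ)) := mul_nonneg hEe0 (by positivity)
            rw [abs_mul, sbZ_abs, mul_one, abs_of_nonneg (by linarith)]
            linarith
          · have hpt : (2:ℤ)^((c:ℕ)-(d:ℕ)-s) ≤ 2^s := pow_le_pow_right₀ (by norm_num) (by omega)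
            have hmm := mul_le_mul_of_nonneg_left hpt hEe0
            have hmm0 : (0:ℤ) ≤ Ee * 2^((c:ℕ)-(d:ℕ)-s) := mul_nonneg hEe0 (by positivity)
            rw [abs_mul, sbZ_abs, mul_one, abs_le]
            constructor <;> linarith
          · have hpt : (2:ℤ)^((c:ℕ)-(d:ℕ)-s) ≤ 2^s := pow_le_pow_right₀ (by norm_num) (by omega)
            have hmm := mul_le_mul_of_nonneg_left hpt hEe0
            have hmm0 : (0:ℤ) ≤ Ee * 2^((c:ℕ)-(d:ℕ)-s) := mul_nonneg hEe0 (by positivity)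
            rw [abs_mul, sbZ_abs, mul_one, abs_le]
            constructor <;> linarith
        rw [rDot_int s' _ _ (fun c => MqF (d:ℕ) s Ee ((i:ℕ)+1) A (c:ℕ)) hgq hbq]
        congr 1
        rw [fin_sum_to_range (MqF (d:ℕ) s Ee ((i:ℕ)+1) A), hAdef]
        exact Mq_sum (d:ℕ) s Ee ((i:ℕ)+1) (F_eq s hs1 ((i:ℕ)+1) (by omega) hIi2)
      · by_cases hl1 : (l:ℕ) < s+1
        · rw [if_neg hl0, if_pos hl1]
          have hll := l.2
          have hgq : ∀ c : Fin ((d:ℕ)+2*s), QMat (d:ℕ) s Ee Cc l c * augment s x i c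
              = ((if (c:ℕ) = (d:ℕ)+s+((l:ℕ)-1) then Cc * sbZ A ((l:ℕ)-1) else 0 : ℤ):ℝ) := by
            intro c
            rw [augment_eval]
            unfold QMat
            rw [if_neg hl0, if_pos hl1]
            by_cases hc : (c:ℕ) = (d:ℕ)+s+((l:ℕ)-1)
            · rw [if_pos hc, if_pos hc, dif_neg (by omega), dif_neg (by omega),
                show (c:ℕ)-(d:ℕ)-s = (l:ℕ)-1 by omega]
              rcases htb : A.testBit ((l:ℕ)-1) <;> simp [sbZ, htb]
            · rw [if_neg hc, if_neg hc, zero_mul]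
              simp
          have hbq : (∑ c : Fin ((d:ℕ)+2*s),
              |if (c:ℕ) = (d:ℕ)+s+((l:ℕ)-1) then Cc * sbZ A ((l:ℕ)-1) else 0|)
                ≤ 2^(s':ℕ) - 1 := by
            apply hBound _ Cc ?_ hCc0 (by push_cast; linarith) hPBc
            intro c
            split_ifs
            · rw [abs_mul, sbZ_abs, mul_one, abs_of_nonneg hCc0]
            · simp [hCc0]
          rw [rDot_int s' _ _ _ hgq hbq]
          congr 1
          exact fin_sum_ite ((d:ℕ)+2*s) ((d:ℕ)+s+((l:ℕ)-1)) (by omega) _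
        · rw [if_neg hl0, if_neg hl1]
          have hgq : ∀ c : Fin ((d:ℕ)+2*s), QMat (d:ℕ) s Ee Cc l c * augment s x i c
              = (((0:ℤ)):ℝ) := by
            intro c
            unfold QMat
            rw [if_neg hl0, if_neg hl1, zero_mul]
            simp
          rw [rDot_int s' _ _ (fun _ => 0) hgq (by simp; linarith [hpowS'])]
          simp
    -- key vectors
    have hk : ∀ (J : ℕ), J < (n:ℕ) → ∀ (hj : J < (n:ℕ)) (l : Fin (s+1+(d:ℕ))),
        rMulVec s' (KMat (d:ℕ) s) (augment s x ⟨J, hj⟩) l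
          = ((if (l:ℕ) = 0 then -1 else if (l:ℕ) < s+1 then sbZ (J+1) ((l:ℕ)-1) else 0 : ℤ):ℝ) := by
      intro J hJ hj l
      show rDot s' (KMat (d:ℕ) s l) (augment s x ⟨J, hj⟩) = _
      have hJ2 : J + 1 < 2^s := by omega
      by_cases hl0 : (l:ℕ) = 0
      · rw [if_pos hl0]
        have hgk : ∀ c : Fin ((d:ℕ)+2*s), KMat (d:ℕ) s l c * augment s x ⟨J, hj⟩ c
            = ((MkF (d:ℕ) s (J+1) (fShift (J+1)) (c:ℕ) : ℤ) : ℝ) := by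
          intro c
          rw [augment_eval]
          unfold KMat MkF
          rw [if_pos hl0]
          rcases lt_or_ge (c:ℕ) (d:ℕ) with h1 | h1
          · rw [dif_pos h1, if_pos h1, if_pos h1]
            simp
          · rw [dif_neg (not_lt.mpr h1), if_neg (not_lt.mpr h1), if_neg (not_lt.mpr h1)]
            rcases lt_or_ge (c:ℕ) ((d:ℕ)+s) with h2 | h2
            · rw [dif_pos h2, if_pos h2, if_pos h2]
              rcases htb : (J+1).testBit ((c:ℕ)-(d:ℕ)) <;>
                simp [sbZ, htb] <;> push_cast <;> ring
            · rw [dif_neg (not_lt.mpr h2), if_neg (not_lt.mpr h2), if_neg (not_lt.mpr h2)]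
              rcases htb : (fShift (J+1)).testBit ((c:ℕ)-(d:ℕ)-s) <;>
                simp [sbZ, htb] <;> push_cast <;> ring
        have hbk : (∑ c : Fin ((d:ℕ)+2*s), |MkF (d:ℕ) s (J+1) (fShift (J+1)) (c:ℕ)|)
            ≤ 2^(s':ℕ) - 1 := by
          apply hBound _ (2^s) ?_ (by positivity) (by push_cast; linarith) hPB2s
          intro c
          have hc2 := c.2
          have hk1 : ∀ t : ℕ, t ≤ s → |kmid t| ≤ 2^s := by
            intro t ht
            unfold kmid
            split_ifs
            · rw [abs_neg, abs_one]
              linarith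
            · rw [abs_neg, abs_of_nonneg (by positivity)]
              exact pow_le_pow_right₀ (by norm_num) (by omega)
          have hk2 : ∀ t : ℕ, t ≤ s → |khi t| ≤ 2^s := by
            intro t ht
            unfold khi
            split_ifs
            · rw [abs_zero]
              positivity
            · rw [abs_of_nonneg (by positivity)]
              exact pow_le_pow_right₀ (by norm_num) (by omega)
          unfold MkF
          split_ifs with gg1 gg2
          · rw [abs_zero]
            positivity
          · rw [abs_mul, sbZ_abs, mul_one]
            exact hk1 _ (by omega)
          · rw [abs_mul, sbZ_abs, mul_one]
            exact hk2 _ (by omega)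
        rw [rDot_int s' _ _ (fun c => MkF (d:ℕ) s (J+1) (fShift (J+1)) (c:ℕ)) hgk hbk]
        congr 1
        rw [fin_sum_to_range (MkF (d:ℕ) s (J+1) (fShift (J+1)))]
        exact Mk_sum (d:ℕ) s (J+1) (F_eq s hs1 (J+1) (by omega) hJ2)
      · by_cases hl1 : (l:ℕ) < s+1
        · rw [if_neg hl0, if_pos hl1]
          have hll := l.2
          have hgk : ∀ c : Fin ((d:ℕ)+2*s), KMat (d:ℕ) s l c * augment s x ⟨J, hj⟩ c
              = ((if (c:ℕ) = (d:ℕ)+((l:ℕ)-1) then sbZ (J+1) ((l:ℕ)-1) else 0 : ℤ):ℝ) := by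
            intro c
            rw [augment_eval]
            unfold KMat
            rw [if_neg hl0, if_pos hl1]
            by_cases hc : (c:ℕ) = (d:ℕ)+((l:ℕ)-1)
            · rw [if_pos hc, if_pos hc, dif_neg (by omega), dif_pos (by omega),
                show (c:ℕ)-(d:ℕ) = (l:ℕ)-1 by omega, one_mul]
              rcases htb : (J+1).testBit ((l:ℕ)-1) <;> simp [sbZ, htb]
            · rw [if_neg hc, if_neg hc, zero_mul]
              simp
          have hbk : (∑ c : Fin ((d:ℕ)+2*s),
              |if (c:ℕ) = (d:ℕ)+((l:ℕ)-1) then sbZ (J+1) ((l:ℕ)-1) else 0|)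
                ≤ 2^(s':ℕ) - 1 := by
            apply hBound _ 1 ?_ (by norm_num) (by push_cast; linarith) hPB1
            intro c
            split_ifs
            · rw [sbZ_abs]
            · simp
          rw [rDot_int s' _ _ _ hgk hbk]
          congr 1
          exact fin_sum_ite ((d:ℕ)+2*s) ((d:ℕ)+((l:ℕ)-1)) (by omega) _
        · rw [if_neg hl0, if_neg hl1]
          have hgk : ∀ c : Fin ((d:ℕ)+2*s), KMat (d:ℕ) s l c * augment s x ⟨J, hj⟩ c
              = (((0:ℤ)):ℝ) := by
            intro c
            unfold KMat
            rw [if_neg hl0, if_neg hl1, zero_mul]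
            simp
          rw [rDot_int s' _ _ (fun _ => 0) hgk (by simp; linarith [hpowS'])]
          simp
    -- scores
    have hz : ∀ (J : ℕ) (hj : J < (n:ℕ)),
        rDot s' (rMulVec s' (QMat (d:ℕ) s Ee Cc) (augment s x i))
            (rMulVec s' (KMat (d:ℕ) s) (augment s x ⟨J, hj⟩))
          = ((-(2*Ee) + Cc * ∑ t ∈ Finset.range s, sbZ A t * sbZ (J+1) t : ℤ) : ℝ) := by
      intro J hj
      have hgz : ∀ l : Fin (s+1+(d:ℕ)),
          rMulVec s' (QMat (d:ℕ) s Ee Cc) (augment s x i) l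
            * rMulVec s' (KMat (d:ℕ) s) (augment s x ⟨J, hj⟩) l
          = ((if (l:ℕ) = 0 then -(2*Ee)
              else if (l:ℕ) < s+1 then Cc * (sbZ A ((l:ℕ)-1) * sbZ (J+1) ((l:ℕ)-1))
              else 0 : ℤ):ℝ) := by
        intro l
        rw [hq l, hk J hj hj l, ← Int.cast_mul]
        congr 1
        split_ifs <;> ring
      have hbz : (∑ l : Fin (s+1+(d:ℕ)),
          |if (l:ℕ) = 0 then -(2*Ee)
            else if (l:ℕ) < s+1 then Cc * (sbZ A ((l:ℕ)-1) * sbZ (J+1) ((l:ℕ)-1))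
            else 0|) ≤ 2^(s':ℕ) - 1 := by
        apply hBound _ (2*Ee + Cc) ?_ (by linarith) (by push_cast; linarith) hPBz
        intro l
        split_ifs
        · rw [abs_neg, abs_of_nonneg (by linarith)]
          linarith
        · rw [abs_mul, abs_mul, sbZ_abs, sbZ_abs, abs_of_nonneg hCc0]
          have he : Cc * (1*1) = Cc := by ring
          rw [he]
          linarith
        · simp
          linarith
      rw [rDot_int s' _ _ _ hgz hbz]
      congr 1
      rw [fin_sum_to_range (fun l => if l = 0 then -(2*Ee)
        else if l < s+1 then Cc * (sbZ A (l-1) * sbZ (J+1) (l-1)) else 0)]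
      exact MZ_sum s (d:ℕ) Ee Cc A (J+1)
    have hzst : (-(2*Ee) + Cc * ∑ t ∈ Finset.range s, sbZ A t * sbZ ((jst:ℕ)+1) t : ℤ) = Cc := by
      have hj1 : (jst:ℕ)+1 = A := by
        show A - 1 + 1 = A
        omega
      rw [hj1, K3_eq]
      linear_combination (-1 : ℤ) * hEC
    have hzmis : ∀ (j : Fin ((i:ℕ)+1)), j ≠ jst →
        (-(2*Ee) + Cc * ∑ t ∈ Finset.range s, sbZ A t * sbZ ((j:ℕ)+1) t : ℤ) ≤ -Cc := by
      intro j hne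
      have hJne : A ≠ (j:ℕ)+1 := by
        intro he
        apply hne
        apply Fin.ext
        show (j:ℕ) = A - 1
        omega
      have hj2 := j.2
      have hT := K3_ne s A ((j:ℕ)+1) hA2 (by omega) hJne
      have hTm := mul_le_mul_of_nonneg_left hT hCc0
      have he : Cc*((s:ℤ)-2) = Cc*((s:ℤ)-1) - Cc := by ring
      linarith [hEC]
    -- exp values
    set Em := rExp s' ((Cc:ℤ):ℝ) with hEm
    have hEmpos : 0 < Em := rExp_pos s' hs'1 _ (by exact_mod_cast hCc0)
    obtain ⟨mE, hmE, hmEeq⟩ := rd_mem_grid s' (Real.exp ((Cc:ℤ):ℝ))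
    have hEmgrid : Em = (mE:ℝ)/2^s' := by rw [hEm, rExp]; exact hmEeq
    have hcastC : ((Cc:ℤ):ℝ) = 2*((s':ℝ)+1) := by rw [← hCdef]; push_cast; ring
    have hEzero : ∀ z : ℤ, z ≤ -Cc → rExp s' ((z:ℤ):ℝ) = 0 := by
      intro z hzle
      rw [rExp]
      apply rd_small s' _ (Real.exp_pos _).le
      have h1 : ((z:ℤ):ℝ) ≤ -(2*((s':ℝ)+1)) := by
        have hc : ((z:ℝ)) ≤ ((-Cc : ℤ):ℝ) := by exact_mod_cast hzle
        rw [Int.cast_neg, hcastC] at hc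
        exact hc
      have h2 : Real.exp ((z:ℝ)) ≤ Real.exp (-(2*((s':ℝ)+1))) := Real.exp_le_exp.mpr h1
      have h3 := exp_bound s'
      have h4 : Real.exp ((z:ℝ)) * 2^s' ≤ Real.exp (-(2*((s':ℝ)+1))) * 2^s' :=
        mul_le_mul_of_nonneg_right h2 (by positivity)
      linarith
    -- the score function as it appears in the goal
    set Z : Fin ((i:ℕ)+1) → ℝ := fun j =>
      rDot s' (rMulVec s' (QMat (d:ℕ) s Ee Cc) (augment s x i))
        (rMulVec s' (KMat (d:ℕ) s)
          (augment s x ⟨(j:ℕ), lt_of_le_of_lt (Nat.lt_succ_iff.mp j.2) i.2⟩)) with hZdef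
    have hZexp : ∀ j, rExp s' (Z j) = if j = jst then Em else 0 := by
      intro j
      have hzj := hz (j:ℕ) (lt_of_le_of_lt (Nat.lt_succ_iff.mp j.2) i.2)
      have hZj : Z j = ((-(2*Ee) + Cc * ∑ t ∈ Finset.range s, sbZ A t * sbZ ((j:ℕ)+1) t : ℤ) : ℝ) := by
        rw [hZdef]
        exact hzj
      rw [hZj]
      by_cases hj : j = jst
      · rw [if_pos hj, hj, hzst]
      · rw [if_neg hj]
        exact hEzero _ (hzmis j hj)
    have hSsum : rSum s' (fun j => rExp s' (Z j)) = Em := by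
      refine Eq.trans (rSum_grid s' _ (fun j => if j = jst then mE else 0) ?_ ?_) ?_
      · intro j
        rw [hZexp j]
        split_ifs
        · exact hEmgrid
        · simp
      · rw [sum_abs_ite]
        exact hmE
      · rw [sum_ite_val]
        exact hEmgrid.symm
    have hwv : ∀ j, rSoftmax s' Z j = if j = jst then (1:ℝ) else 0 := by
      intro j
      show rDiv s' (rExp s' (Z j)) (rSum s' fun j' => rExp s' (Z j')) = _
      rw [hSsum, hZexp j]
      by_cases hj : j = jst
      · rw [if_pos hj, if_pos hj, rDiv, div_self hEmpos.ne']
        exact rd_one s' hs'1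
      · rw [if_neg hj, if_neg hj, rDiv, zero_div]
        exact rd_zero s'
    -- value vectors
    have hv : ∀ (J : ℕ) (hj : J < (n:ℕ)) (l : Fin (s+1+(d:ℕ))) (hls : s+1 ≤ (l:ℕ))
        (hld : (l:ℕ) - (s+1) < (d:ℕ)),
        rMulVec s' (VMat (d:ℕ) s) (augment s x ⟨J, hj⟩) l
          = x ⟨J, hj⟩ ⟨(l:ℕ)-(s+1), hld⟩ := by
      intro J hj l hls hld
      show rDot s' (VMat (d:ℕ) s l) (augment s x ⟨J, hj⟩) = _
      obtain ⟨mv, hmv, hmveq⟩ := Fp_grid (hx ⟨J, hj⟩ ⟨(l:ℕ)-(s+1), hld⟩)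
      refine Eq.trans (rDot_grid s' _ _ (fun c => if (c:ℕ) = (l:ℕ)-(s+1) then mv else 0) ?_ ?_) ?_
      · intro c
        unfold VMat
        by_cases hc : (c:ℕ) = (l:ℕ)-(s+1)
        · rw [if_pos ⟨hls, hc⟩, one_mul, augment_eval, dif_pos (show (c:ℕ) < (d:ℕ) by omega),
            if_pos hc]
          exact (congrArg (x ⟨J, hj⟩) (Fin.ext hc)).trans hmveq
        · rw [if_neg (fun hh => hc hh.2), zero_mul, if_neg hc]
          simp
      · calc (∑ c : Fin ((d:ℕ)+2*s), |if (c:ℕ) = (l:ℕ)-(s+1) then mv else 0|)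
            ≤ |mv| := fin_sum_abs_ite_le _ _ _
          _ ≤ 2^(2*s') - 1 := hmv
      · rw [fin_sum_ite ((d:ℕ)+2*s) ((l:ℕ)-(s+1)) (by omega) mv]
        exact hmveq.symm
    have hv0 : ∀ (J : ℕ) (hj : J < (n:ℕ)) (l : Fin (s+1+(d:ℕ))), ¬(s+1 ≤ (l:ℕ)) →
        rMulVec s' (VMat (d:ℕ) s) (augment s x ⟨J, hj⟩) l = 0 := by
      intro J hj l hls
      show rDot s' (VMat (d:ℕ) s l) (augment s x ⟨J, hj⟩) = _
      refine Eq.trans (rDot_grid s' _ _ (fun _ => 0) ?_ ?_) ?_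
      · intro c
        unfold VMat
        rw [if_neg (fun hh => hls hh.1), zero_mul]
        simp
      · simp
        linarith [hpowG]
      · simp
    -- final computation
    rcases lt_or_ge (k:ℕ) (d:ℕ) with hkd | hkd
    · rw [dif_pos hkd]
      obtain ⟨mX, hmX, hmXeq⟩ := Fp_grid (hx ⟨A-1, hAn⟩ ⟨(k:ℕ), hkd⟩)
      refine Eq.trans (rDot_grid s' _ _
        (fun l => if (l:ℕ) = s+1+(k:ℕ) then mX else 0) ?_ ?_) ?_
      · intro l
        by_cases hl : (l:ℕ) = s+1+(k:ℕ)
        · rw [if_pos hl]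
          have hVl : VMat (d:ℕ) s l k = 1 := by
            unfold VMat
            rw [if_pos ⟨by omega, by omega⟩]
          rw [hVl, one_mul]
          refine Eq.trans (rSum_grid s' _ (fun j => if j = jst then mX else 0) ?_ ?_) ?_
          · intro j
            rw [hwv j]
            by_cases hj : j = jst
            · rw [if_pos hj, if_pos hj, hj, rMul, one_mul]
              rw [hv (jst:ℕ) (lt_of_le_of_lt (Nat.lt_succ_iff.mp jst.2) i.2) l (by omega) (by omega)]
              have hfix : x ⟨(jst:ℕ), lt_of_le_of_lt (Nat.lt_succ_iff.mp jst.2) i.2⟩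
                  ⟨(l:ℕ)-(s+1), by omega⟩ = (mX:ℝ)/2^s' := by
                have e1 : (⟨(jst:ℕ), lt_of_le_of_lt (Nat.lt_succ_iff.mp jst.2) i.2⟩ : Fin (n:ℕ))
                    = ⟨A-1, hAn⟩ := rfl
                have e2 : (⟨(l:ℕ)-(s+1), by omega⟩ : Fin (d:ℕ)) = ⟨(k:ℕ), hkd⟩ := by
                  simp only [Fin.mk.injEq]
                  omega
                rw [e1, e2]
                exact hmXeq
              rw [hfix]
              exact rd_grid s' mX hmX
            · rw [if_neg hj, if_neg hj, rMul, zero_mul, rd_zero]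
              try simp
          · calc (∑ j : Fin ((i:ℕ)+1), |if j = jst then mX else 0|)
                = |mX| := sum_abs_ite jst mX
              _ ≤ 2^(2*s') - 1 := hmX
          · rw [sum_ite_val]
        · rw [if_neg hl]
          have hVl : VMat (d:ℕ) s l k = 0 := by
            unfold VMat
            rw [if_neg]
            rintro ⟨h1, h2⟩
            omega
          rw [hVl, zero_mul]
          simp
      · calc (∑ l : Fin (s+1+(d:ℕ)), |if (l:ℕ) = s+1+(k:ℕ) then mX else 0|)
            ≤ |mX| := fin_sum_abs_ite_le _ _ _
          _ ≤ 2^(2*s') - 1 := hmX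
      · rw [fin_sum_ite (s+1+(d:ℕ)) (s+1+(k:ℕ)) (by omega) mX]
        exact hmXeq.symm
    · rw [dif_neg (not_lt.mpr hkd)]
      refine Eq.trans (rDot_grid s' _ _ (fun _ => 0) ?_ ?_) ?_
      · intro l
        have hVl : VMat (d:ℕ) s l k = 0 := by
          unfold VMat
          rw [if_neg]
          rintro ⟨h1, h2⟩
          have := l.2
          omega
        rw [hVl, zero_mul]
        simp
      · simp
        linarith [hpowG]
      · simp


end LoopedTF

end
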